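/- Let G = (√5+1)/2 and h(x) be the invariant density at α = G: h(x) = (3 log G)^{−1}/(x+G+1) for x ∈ [G−2, (1−G)/G) and h(x) = (3 log G)^{−1}/(x+1) for x ∈ [(1−G)/G, G) (note (α−1)/(2−α) = G when α = G, so the third piece is empty). Then ∫_{G−2}^{G} log|x| · h(x) dx = −π²/(18 log G). -/

import Mathlib

/-- The invariant density at α = G (note (α−1)/(2−α) = G at α = G, so the
third piece of the density is empty). -/
noncomputable def hG (x : ℝ) : ℝ :=
  let G : ℝ := (Real.sqrt 5 + 1)/2
  (3 * Real.log G)⁻¹ * (if x < (1-G)/G then 1/(x+G+1) else 1/(x+1))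

open Real MeasureTheory intervalIntegral Set Filter Topology

/-! ### Auxiliary lemmas: integrability of `log` -/

lemma neg_log_le_two_div_sqrt {x : ℝ} (hx : 0 < x) : -Real.log x ≤ 2 / Real.sqrt x := by
  have hs : 0 < Real.sqrt x := Real.sqrt_pos.2 hx
  have h1 : Real.log (Real.sqrt x)⁻¹ ≤ (Real.sqrt x)⁻¹ - 1 :=
    Real.log_le_sub_one_of_pos (by positivity)
  have h2 : Real.log (Real.sqrt x)⁻¹ = -(Real.log x) / 2 := by
    rw [Real.log_inv, Real.log_sqrt hx.le]; ring
  rw [h2] at h1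
  have : (Real.sqrt x)⁻¹ - 1 ≤ (Real.sqrt x)⁻¹ := by linarith
  have h3 : -(Real.log x) / 2 ≤ (Real.sqrt x)⁻¹ := le_trans h1 this
  rw [div_eq_mul_inv 2]
  linarith

lemma intervalIntegrable_log01 : IntervalIntegrable Real.log volume 0 1 := by
  have hg : IntervalIntegrable (fun x : ℝ => 2 * x ^ (-(1:ℝ)/2)) volume 0 1 :=
    (intervalIntegrable_rpow' (by norm_num)).const_mul 2
  refine hg.mono_fun Real.measurable_log.aestronglyMeasurable ?_
  rw [Set.uIoc_of_le (by norm_num : (0:ℝ) ≤ 1)]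
  filter_upwards [ae_restrict_mem measurableSet_Ioc] with x hx
  have hx0 : 0 < x := hx.1
  have hx1 : x ≤ 1 := hx.2
  have hlog : Real.log x ≤ 0 := Real.log_nonpos hx0.le hx1
  have hnorm : ‖Real.log x‖ = -Real.log x := by rw [Real.norm_eq_abs, abs_of_nonpos hlog]
  rw [hnorm, Real.norm_eq_abs]
  have hb : -Real.log x ≤ 2 / Real.sqrt x := neg_log_le_two_div_sqrt hx0
  have hr : x ^ (-(1:ℝ)/2) = (Real.sqrt x)⁻¹ := by
    rw [Real.sqrt_eq_rpow, ← Real.rpow_neg hx0.le]; norm_num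
  calc -Real.log x ≤ 2 / Real.sqrt x := hb
    _ = 2 * x ^ (-(1:ℝ)/2) := by rw [hr, div_eq_mul_inv]
    _ ≤ |2 * x ^ (-(1:ℝ)/2)| := le_abs_self _

lemma intervalIntegrable_log_zero (c : ℝ) : IntervalIntegrable Real.log volume 0 c := by
  rcases le_or_gt 0 c with hc | hc
  · rcases le_or_gt c 1 with h1 | h1
    · exact intervalIntegrable_log01.mono_set (by
        rw [Set.uIcc_of_le hc, Set.uIcc_of_le (by norm_num : (0:ℝ) ≤ 1)]
        exact Set.Icc_subset_Icc le_rfl h1)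
    · exact intervalIntegrable_log01.trans
        ((Real.continuousOn_log.mono (fun x hx => by
          rw [Set.uIcc_of_le h1.le] at hx
          exact ne_of_gt (lt_of_lt_of_le one_pos hx.1) : ∀ x ∈ Set.uIcc (1:ℝ) c, x ≠ 0)).intervalIntegrable)
  · have h : IntervalIntegrable Real.log volume 0 (-c) := by
      rcases le_or_gt (-c) 1 with h1 | h1
      · exact intervalIntegrable_log01.mono_set (by
          rw [Set.uIcc_of_le (by linarith), Set.uIcc_of_le (by norm_num : (0:ℝ) ≤ 1)]
          exact Set.Icc_subset_Icc le_rfl h1)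
      · exact intervalIntegrable_log01.trans
          ((Real.continuousOn_log.mono (fun x hx => by
            rw [Set.uIcc_of_le h1.le] at hx
            exact ne_of_gt (lt_of_lt_of_le one_pos hx.1) : ∀ x ∈ Set.uIcc (1:ℝ) (-c), x ≠ 0)).intervalIntegrable)
    have := ((IntervalIntegrable.iff_comp_neg (by simp)).mp h)
    simp only [Real.log_neg_eq_log, neg_zero, neg_neg] at this
    exact this

lemma intervalIntegrable_log_all (a b : ℝ) : IntervalIntegrable Real.log volume a b :=
  ((intervalIntegrable_log_zero a).symm).trans (intervalIntegrable_log_zero b)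

/-! ### The function `K(a) = ∫_0^a log t / (1-t) dt` -/

lemma gg_meas : Measurable (fun t : ℝ => Real.log t * (1 - t)⁻¹) :=
  Real.measurable_log.mul ((measurable_const.sub measurable_id).inv)

lemma neg_log_le_of_half {t : ℝ} (ht : 1/2 ≤ t) (ht1 : t ≤ 1) : -Real.log t ≤ 2 * (1 - t) := by
  have ht0 : (0:ℝ) < t := by linarith
  have h1 : Real.log t⁻¹ ≤ t⁻¹ - 1 := Real.log_le_sub_one_of_pos (by positivity)
  rw [Real.log_inv] at h1
  have h2 : t⁻¹ - 1 = (1 - t)/t := by field_simp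
  have h3 : (1-t)/t ≤ 2*(1-t) := by
    rw [div_le_iff₀ ht0]
    nlinarith
  linarith [h1, h2 ▸ h1]

lemma gg_integrable01 :
    IntervalIntegrable (fun t : ℝ => Real.log t * (1 - t)⁻¹) volume 0 1 := by
  have h1 : IntervalIntegrable (fun t : ℝ => Real.log t * (1 - t)⁻¹) volume 0 (1/2) := by
    apply (intervalIntegrable_log_all 0 (1/2)).mul_continuousOn
    apply ContinuousOn.inv₀ (by fun_prop)
    intro x hx
    rw [Set.uIcc_of_le (by norm_num : (0:ℝ) ≤ 1/2)] at hx
    have := hx.2; intro h; linarith [sub_eq_zero.mp h]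
  have h2 : IntervalIntegrable (fun t : ℝ => Real.log t * (1 - t)⁻¹) volume (1/2) 1 := by
    refine (_root_.intervalIntegrable_const (c := (2:ℝ)) (μ := volume) (a := 1/2)
      (b := 1)).mono_fun gg_meas.aestronglyMeasurable ?_
    rw [Set.uIoc_of_le (by norm_num : (1:ℝ)/2 ≤ 1)]
    filter_upwards [ae_restrict_mem measurableSet_Ioc] with t ht
    have ht0 : (0:ℝ) < t := by linarith [ht.1]
    have hlog : Real.log t ≤ 0 := Real.log_nonpos ht0.le ht.2
    have h1t : 0 ≤ 1 - t := by linarith [ht.2]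
    rw [Real.norm_eq_abs, Real.norm_eq_abs, abs_of_nonneg (by norm_num : (0:ℝ) ≤ 2)]
    rcases eq_or_lt_of_le ht.2 with h | h
    · subst h; norm_num
    · have h1t' : 0 < 1 - t := by linarith
      rw [abs_mul, abs_of_nonpos hlog, abs_of_nonneg (inv_nonneg.mpr h1t)]
      have hble := neg_log_le_of_half (le_of_lt ht.1) ht.2
      calc -Real.log t * (1-t)⁻¹ ≤ 2*(1-t) * (1-t)⁻¹ := by
            apply mul_le_mul_of_nonneg_right hble (inv_nonneg.mpr h1t)
        _ = 2 := by field_simp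
  exact h1.trans h2

lemma gg_integrable0c {c : ℝ} (hc0 : 0 ≤ c) (hc : c ≤ 1) :
    IntervalIntegrable (fun t : ℝ => Real.log t * (1 - t)⁻¹) volume 0 c :=
  gg_integrable01.mono_set (by
    rw [Set.uIcc_of_le hc0, Set.uIcc_of_le (by norm_num : (0:ℝ) ≤ 1)]
    exact Set.Icc_subset_Icc le_rfl hc)

noncomputable def KK (a : ℝ) : ℝ := ∫ t in (0:ℝ)..a, Real.log t * (1 - t)⁻¹

lemma KK_cont : ContinuousOn KK (Set.Icc 0 1) := by
  have h := intervalIntegral.continuousOn_primitive_interval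
    (f := fun t : ℝ => Real.log t * (1 - t)⁻¹) (μ := volume) (a := 0) (b := 1) ?_
  · rwa [Set.uIcc_of_le (by norm_num : (0:ℝ) ≤ 1)] at h
  · rw [Set.uIcc_of_le (by norm_num : (0:ℝ) ≤ 1)]
    have h := gg_integrable01.def'
    rw [Set.uIoc_of_le (by norm_num : (0:ℝ) ≤ 1)] at h
    exact (integrableOn_Icc_iff_integrableOn_Ioc).mpr h

lemma KK_zero : KK 0 = 0 := intervalIntegral.integral_same

lemma KK_hasDeriv {a : ℝ} (ha : a ∈ Set.Ioo (0:ℝ) 1) :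
    HasDerivAt KK (Real.log a * (1 - a)⁻¹) a := by
  refine intervalIntegral.integral_hasDerivAt_right (gg_integrable0c ha.1.le ha.2.le)
    (gg_meas.aestronglyMeasurable.stronglyMeasurableAtFilter) ?_
  have h1 : ContinuousAt Real.log a := Real.continuousAt_log (ne_of_gt ha.1)
  have h2 : ContinuousAt (fun t : ℝ => (1 - t)⁻¹) a := by
    apply ContinuousAt.inv₀ (by fun_prop)
    intro h; have := sub_eq_zero.mp h; linarith [ha.2]
  exact h1.mul h2

/-! ### The reflection function `F` and its constancy -/

noncomputable def FF (a : ℝ) : ℝ := KK a + KK (1 - a) + Real.log a * Real.log (1 - a)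

lemma FF_hasDeriv {a : ℝ} (ha : a ∈ Set.Ioo (0:ℝ) 1) : HasDerivAt FF 0 a := by
  have ha' : (1 - a) ∈ Set.Ioo (0:ℝ) 1 := ⟨by linarith [ha.2], by linarith [ha.1]⟩
  have h1 := KK_hasDeriv ha
  have h2 : HasDerivAt (fun a => KK (1 - a)) (-(Real.log (1-a) * (1 - (1-a))⁻¹)) a := by
    have := (KK_hasDeriv ha').comp a (((hasDerivAt_id a).const_sub 1))
    simpa [Function.comp_def] using this
  have h3 : HasDerivAt (fun a => Real.log a * Real.log (1 - a))
      (a⁻¹ * Real.log (1-a) + Real.log a * (-(1-a)⁻¹)) a := by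
    have hl := Real.hasDerivAt_log (ne_of_gt ha.1)
    have hl2 : HasDerivAt (fun a : ℝ => Real.log (1 - a)) (-(1-a)⁻¹) a := by
      have := (Real.hasDerivAt_log (ne_of_gt ha'.1)).comp a ((hasDerivAt_id a).const_sub 1)
      simpa [Function.comp_def] using this
    exact hl.mul hl2
  have hsum := (h1.add h2).add h3
  apply hsum.congr_deriv
  have h1a : (1:ℝ) - (1 - a) = a := by ring
  rw [h1a]
  field_simp
  ring

lemma FF_const {a b : ℝ} (ha : a ∈ Set.Ioo (0:ℝ) 1) (hb : b ∈ Set.Ioo (0:ℝ) 1) (hab : a ≤ b) :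
    FF b = FF a := by
  have hsub : Set.Icc a b ⊆ Set.Ioo (0:ℝ) 1 :=
    fun x hx => ⟨lt_of_lt_of_le ha.1 hx.1, lt_of_le_of_lt hx.2 hb.2⟩
  have hcont : ContinuousOn FF (Set.Icc a b) := fun x hx =>
    (FF_hasDeriv (hsub hx)).continuousAt.continuousWithinAt
  have hderiv : ∀ x ∈ Set.Ico a b, HasDerivWithinAt FF 0 (Set.Ici x) x := fun x hx =>
    (FF_hasDeriv (hsub ⟨hx.1, hx.2.le⟩)).hasDerivWithinAt
  exact constant_of_has_deriv_right_zero hcont hderiv b ⟨hab, le_rfl⟩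

/-! ### Limits and the value of the constant -/

lemma tendsto_KK_one : Tendsto KK (𝓝[<] (1:ℝ)) (𝓝 (KK 1)) := by
  have h : ContinuousWithinAt KK (Set.Ioo 0 1) 1 :=
    (KK_cont 1 ⟨by norm_num, le_rfl⟩).mono Set.Ioo_subset_Icc_self
  rw [ContinuousWithinAt, nhdsWithin_Ioo_eq_nhdsLT one_pos] at h
  exact h

lemma tendsto_KK_zero : Tendsto KK (𝓝[>] (0:ℝ)) (𝓝 0) := by
  have h : ContinuousWithinAt KK (Set.Ioo 0 1) 0 :=
    (KK_cont 0 ⟨le_rfl, by norm_num⟩).mono Set.Ioo_subset_Icc_self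
  rw [ContinuousWithinAt, nhdsWithin_Ioo_eq_nhdsGT one_pos, KK_zero] at h
  exact h

lemma tendsto_one_sub : Tendsto (fun a : ℝ => 1 - a) (𝓝[<] (1:ℝ)) (𝓝[>] (0:ℝ)) := by
  apply tendsto_nhdsWithin_of_tendsto_nhds_of_eventually_within
  · have h : Tendsto (fun a : ℝ => 1 - a) (𝓝 1) (𝓝 (1-1)) :=
      (continuous_const.sub continuous_id).tendsto 1
    simpa using h.mono_left nhdsWithin_le_nhds
  · filter_upwards [self_mem_nhdsWithin] with a ha
    exact sub_pos.mpr (Set.mem_Iio.mp ha)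

lemma tendsto_log_prod :
    Tendsto (fun a : ℝ => Real.log a * Real.log (1-a)) (𝓝[<] (1:ℝ)) (𝓝 0) := by
  apply squeeze_zero_norm' (a := fun a => 4 * Real.sqrt (1 - a))
  · filter_upwards [Ioo_mem_nhdsLT_of_mem (by norm_num : (1:ℝ) ∈ Set.Ioc (1/2) 1)] with a ha
    have ha1 : a < 1 := ha.2
    have ha0 : (0:ℝ) < a := by have := ha.1; linarith
    have h1a : (0:ℝ) < 1 - a := by linarith
    have hb1 : -Real.log a ≤ 2 * (1 - a) := neg_log_le_of_half ha.1.le ha1.le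
    have hb2 : -Real.log (1-a) ≤ 2 / Real.sqrt (1-a) := neg_log_le_two_div_sqrt h1a
    have hla : Real.log a ≤ 0 := Real.log_nonpos ha0.le ha1.le
    have hl1a : Real.log (1-a) ≤ 0 := Real.log_nonpos h1a.le (by linarith)
    rw [Real.norm_eq_abs, abs_mul, abs_of_nonpos hla, abs_of_nonpos hl1a]
    have hs : (0:ℝ) < Real.sqrt (1-a) := Real.sqrt_pos.2 h1a
    calc -Real.log a * -Real.log (1-a) ≤ (2*(1-a)) * (2 / Real.sqrt (1-a)) := by
          apply mul_le_mul hb1 hb2 (by linarith) (by positivity)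
      _ = 4 * ((1-a) / Real.sqrt (1-a)) := by ring
      _ = 4 * Real.sqrt (1-a) := by rw [Real.div_sqrt]
  · have h : Tendsto (fun a : ℝ => 4 * Real.sqrt (1-a)) (𝓝 1) (𝓝 (4 * Real.sqrt (1-1))) := by
      apply Tendsto.const_mul
      exact (Real.continuous_sqrt.comp (continuous_const.sub continuous_id)).tendsto 1
    simpa using h.mono_left nhdsWithin_le_nhds

lemma FF_eq_KK_one {p : ℝ} (hp : p ∈ Set.Ioo (0:ℝ) 1) : FF p = KK 1 := by
  have h1 : Tendsto FF (𝓝[<] (1:ℝ)) (𝓝 (KK 1 + 0 + 0)) :=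
    (tendsto_KK_one.add ((tendsto_KK_zero.comp tendsto_one_sub))).add tendsto_log_prod
  have h2 : Tendsto FF (𝓝[<] (1:ℝ)) (𝓝 (FF p)) := by
    apply Tendsto.congr' _ (tendsto_const_nhds (x := FF p))
    filter_upwards [Ioo_mem_nhdsLT_of_mem (Set.right_mem_Ioc.mpr hp.2)] with a ha
    exact (FF_const hp ⟨lt_trans hp.1 ha.1, ha.2⟩ ha.1.le).symm
  have := tendsto_nhds_unique h2 h1
  simpa using this

/-! ### `K(1) = -π²/6` via termwise integration -/

noncomputable def fn (n : ℕ) (t : ℝ) : ℝ := t ^ n * (-Real.log t)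

lemma fn_integrable (n : ℕ) : IntervalIntegrable (fn n) volume 0 1 := by
  have := ((intervalIntegrable_log_all 0 1).neg).continuousOn_mul
    (g := fun t : ℝ => t ^ n) (by fun_prop)
  exact this

lemma fn_integral (n : ℕ) : ∫ t in (0:ℝ)..1, fn n t = 1/((n:ℝ)+1)^2 := by
  set c : ℝ := 1/((n:ℝ)+1)^2 with hc
  have hn1 : ((n:ℝ)+1) ≠ 0 := by positivity
  set A : ℝ → ℝ := fun t => c * t^(n+1) - (t^(n+1) * Real.log t)/((n:ℝ)+1) with hA
  have hderiv : ∀ t ∈ Set.Ioo (0:ℝ) 1, HasDerivAt A (fn n t) t := by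
    intro t ht
    have h1 : HasDerivAt (fun t : ℝ => t^(n+1)) (((n:ℝ)+1) * t^n) t := by
      simpa using hasDerivAt_pow (n+1) t
    have h2 : HasDerivAt Real.log t⁻¹ t := Real.hasDerivAt_log (ne_of_gt ht.1)
    have h3 : HasDerivAt (fun t : ℝ => t^(n+1) * Real.log t)
        ((((n:ℝ)+1) * t^n) * Real.log t + t^(n+1) * t⁻¹) t := h1.mul h2
    have hcomb := (h1.const_mul c).sub (h3.div_const ((n:ℝ)+1))
    apply hcomb.congr_deriv
    have htne : t ≠ 0 := ne_of_gt ht.1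
    have e1 : t^(n+1) * t⁻¹ = t^n := by rw [pow_succ]; field_simp
    rw [e1, fn, hc]
    field_simp
    ring
  have ha : Tendsto A (𝓝[>] (0:ℝ)) (𝓝 0) := by
    have h1 : Tendsto (fun t : ℝ => c * t^(n+1)) (𝓝[>] (0:ℝ)) (𝓝 0) := by
      have := ((continuous_pow (n+1)).tendsto 0).const_mul c
      simpa using this.mono_left nhdsWithin_le_nhds
    have h2 : Tendsto (fun t : ℝ => (t^(n+1) * Real.log t)/((n:ℝ)+1)) (𝓝[>] (0:ℝ)) (𝓝 0) := by
      have hbase : Tendsto (fun t : ℝ => Real.log t * t ^ (1:ℝ)) (𝓝[>] (0:ℝ)) (𝓝 0) :=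
        tendsto_log_mul_rpow_nhdsGT_zero one_pos
      have hpow : Tendsto (fun t : ℝ => t ^ n) (𝓝[>] (0:ℝ)) (𝓝 (0 ^ n)) :=
        ((continuous_pow n).tendsto 0).mono_left nhdsWithin_le_nhds
      have hmul := hbase.mul hpow
      have hcg : Tendsto (fun t : ℝ => t^(n+1) * Real.log t) (𝓝[>] (0:ℝ)) (𝓝 0) := by
        apply Tendsto.congr' _ (by simpa using hmul)
        filter_upwards [self_mem_nhdsWithin] with t ht
        ring
      simpa using hcg.div_const ((n:ℝ)+1)
    have := h1.sub h2
    simpa using this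
  have hb : Tendsto A (𝓝[<] (1:ℝ)) (𝓝 c) := by
    have hcont : ContinuousAt A 1 := by
      apply ContinuousAt.sub
      · fun_prop
      · apply ContinuousAt.div_const
        exact (continuousAt_pow _ _).mul (Real.continuousAt_log one_ne_zero)
    have h := hcont.tendsto.mono_left (nhdsWithin_le_nhds (s := Set.Iio (1:ℝ)))
    have hA1 : A 1 = c := by simp [hA]
    rwa [hA1] at h
  have := intervalIntegral.integral_eq_sub_of_hasDerivAt_of_tendsto one_pos hderiv
    (fn_integrable n) ha hb
  rw [this]; simp [hc]

lemma fn_meas (n : ℕ) : Measurable (fn n) :=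
  (measurable_id.pow_const n).mul Real.measurable_log.neg

lemma fn_nonneg {n : ℕ} {t : ℝ} (ht : t ∈ Set.Ioc (0:ℝ) 1) : 0 ≤ fn n t := by
  have := Real.log_nonpos ht.1.le ht.2
  have h0 : (0:ℝ) ≤ t ^ n := pow_nonneg ht.1.le n
  exact mul_nonneg h0 (by linarith)

lemma summable_shift : Summable (fun n : ℕ => 1/((n:ℝ)+1)^2) := by
  have h : Summable (fun n : ℕ => 1/(n:ℝ)^2) := by
    simpa using Real.summable_one_div_nat_pow.mpr (by norm_num : 1 < 2)
  have := (summable_nat_add_iff 1).mpr h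
  simpa using this

lemma hasSum_shift : HasSum (fun n : ℕ => 1/((n:ℝ)+1)^2) (Real.pi^2/6) := by
  have h0 : HasSum (fun n : ℕ => 1/(n:ℝ)^2)
      (Real.pi^2/6 + ∑ i ∈ Finset.range 1, 1/(i:ℝ)^2) := by
    simpa using hasSum_zeta_two
  have h := (hasSum_nat_add_iff (f := fun n : ℕ => 1/(n:ℝ)^2) 1).mpr h0
  push_cast at h
  exact h

lemma KK_one : KK 1 = -(Real.pi^2/6) := by
  set μ := volume.restrict (Set.Ioc (0:ℝ) 1) with hμ
  have hfn_int : ∀ n, Integrable (fn n) μ := by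
    intro n
    have h := (fn_integrable n)
    rw [intervalIntegrable_iff_integrableOn_Ioc_of_le (by norm_num : (0:ℝ) ≤ 1)] at h
    exact h
  have key : ∫ t, (∑' n, fn n t) ∂μ = ∑' n, ∫ t, fn n t ∂μ := by
    apply MeasureTheory.integral_tsum (fun n => (fn_meas n).aestronglyMeasurable)
    have heq : ∀ n, ∫⁻ t, ‖fn n t‖ₑ ∂μ = ENNReal.ofReal (1/((n:ℝ)+1)^2) := by
      intro n
      rw [← MeasureTheory.ofReal_integral_norm_eq_lintegral_enorm (hfn_int n)]
      congr 1
      have h : ∫ t, ‖fn n t‖ ∂μ = ∫ t, fn n t ∂μ := by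
        apply MeasureTheory.setIntegral_congr_fun measurableSet_Ioc
        intro t ht
        exact Real.norm_of_nonneg (fn_nonneg ht)
      rw [h, ← intervalIntegral.integral_of_le (by norm_num : (0:ℝ) ≤ 1), fn_integral n]
    rw [tsum_congr heq,
      ← ENNReal.ofReal_tsum_of_nonneg (fun n => by positivity) summable_shift]
    exact ENNReal.ofReal_ne_top
  have hpt : ∀ t ∈ Set.Ioc (0:ℝ) 1, Real.log t * (1-t)⁻¹ = -(∑' n, fn n t) := by
    intro t ht
    rcases eq_or_lt_of_le ht.2 with h1 | h1
    · subst h1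
      simp [fn]
    · have hgeo : ∑' n : ℕ, t ^ n = (1 - t)⁻¹ := tsum_geometric_of_lt_one ht.1.le h1
      have h : ∑' n, fn n t = (∑' n : ℕ, t ^ n) * (-Real.log t) := tsum_mul_right
      rw [h, hgeo]
      ring
  have hKKμ : KK 1 = ∫ t, Real.log t * (1-t)⁻¹ ∂μ := by
    rw [KK, intervalIntegral.integral_of_le (by norm_num : (0:ℝ) ≤ 1)]
  rw [hKKμ]
  rw [MeasureTheory.setIntegral_congr_fun measurableSet_Ioc hpt]
  rw [MeasureTheory.integral_neg, key]
  have hsum : ∑' n, ∫ t, fn n t ∂μ = Real.pi^2/6 := by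
    have h : ∀ n, ∫ t, fn n t ∂μ = 1/((n:ℝ)+1)^2 := by
      intro n
      rw [← intervalIntegral.integral_of_le (by norm_num : (0:ℝ) ≤ 1), fn_integral n]
    simp_rw [h]
    exact hasSum_shift.tsum_eq
  rw [hsum]

/-! ### The substitution `u = x/(1+x)` -/

noncomputable def qq (x : ℝ) : ℝ := Real.log x * (1 + x)⁻¹

lemma qq_integrable {a b : ℝ} (ha : -1 < a) (hb : -1 < b) :
    IntervalIntegrable qq volume a b := by
  apply (intervalIntegrable_log_all a b).mul_continuousOn
  apply ContinuousOn.inv₀ (by fun_prop)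
  intro x hx
  have h1 : a ⊓ b ≤ x := hx.1
  have hm : -1 < a ⊓ b := lt_min ha hb
  intro h
  have : x = -1 := by linarith [add_eq_zero_iff_neg_eq.mp h]
  linarith

noncomputable def II (b : ℝ) : ℝ := ∫ x in (0:ℝ)..b, qq x
noncomputable def WW (b : ℝ) : ℝ := II b - KK (b/(1+b)) - (Real.log (1+b))^2/2

lemma WW_hasDeriv {b : ℝ} (hb : 0 < b) : HasDerivAt WW 0 b := by
  have h1b : (0:ℝ) < 1 + b := by linarith
  have hu : b/(1+b) ∈ Set.Ioo (0:ℝ) 1 := by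
    constructor
    · positivity
    · rw [div_lt_one h1b]; linarith
  have hI : HasDerivAt II (qq b) b := by
    refine intervalIntegral.integral_hasDerivAt_right (qq_integrable (by norm_num) (by linarith))
      ((Real.measurable_log.mul
        ((measurable_const.add measurable_id).inv)).aestronglyMeasurable.stronglyMeasurableAtFilter)
      ?_
    exact (Real.continuousAt_log (ne_of_gt hb)).mul
      (ContinuousAt.inv₀ (by fun_prop) (ne_of_gt h1b))
  have hu' : HasDerivAt (fun b : ℝ => b/(1+b)) ((1*(1+b) - b*1)/(1+b)^2) b :=
    (hasDerivAt_id b).div ((hasDerivAt_id b).const_add 1) (ne_of_gt h1b)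
  have hK : HasDerivAt (fun b : ℝ => KK (b/(1+b)))
      ((Real.log (b/(1+b)) * (1 - b/(1+b))⁻¹) * ((1*(1+b) - b*1)/(1+b)^2)) b :=
    HasDerivAt.comp b (KK_hasDeriv hu) hu'
  have hL : HasDerivAt (fun b : ℝ => (Real.log (1+b))^2/2)
      ((2 * Real.log (1+b) ^ 1 * ((1+b)⁻¹ * 1))/2) b := by
    have hlog : HasDerivAt (fun b : ℝ => Real.log (1+b)) ((1+b)⁻¹ * 1) b :=
      (Real.hasDerivAt_log (ne_of_gt h1b)).comp b ((hasDerivAt_id b).const_add 1)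
    exact (hlog.pow 2).div_const 2
  have hcomb := (hI.sub hK).sub hL
  apply hcomb.congr_deriv
  have e1 : 1 - b/(1+b) = (1+b)⁻¹ := by field_simp; ring
  have e2 : Real.log (b/(1+b)) = Real.log b - Real.log (1+b) :=
    Real.log_div (ne_of_gt hb) (ne_of_gt h1b)
  rw [e1, e2, inv_inv, qq]
  field_simp
  ring

lemma WW_const {b : ℝ} (hb : 0 < b) {c : ℝ} (hbc : b ≤ c) : WW c = WW b := by
  have hsub : Set.Icc b c ⊆ Set.Ioi (0:ℝ) := fun x hx => lt_of_lt_of_le hb hx.1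
  exact constant_of_has_deriv_right_zero
    (fun x hx => (WW_hasDeriv (hsub hx)).continuousAt.continuousWithinAt)
    (fun x hx => (WW_hasDeriv (hsub ⟨hx.1, hx.2.le⟩)).hasDerivWithinAt) c ⟨hbc, le_rfl⟩

lemma tendsto_II_zero : Tendsto II (𝓝[>] (0:ℝ)) (𝓝 0) := by
  have hint : IntegrableOn qq (Set.uIcc 0 1) volume := by
    have h := qq_integrable (by norm_num : (-1:ℝ) < 0) (by norm_num : (-1:ℝ) < 1)
    rw [Set.uIcc_of_le (by norm_num : (0:ℝ) ≤ 1)]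
    rw [intervalIntegrable_iff_integrableOn_Ioc_of_le (by norm_num : (0:ℝ) ≤ 1)] at h
    exact (integrableOn_Icc_iff_integrableOn_Ioc).mpr h
  have h := intervalIntegral.continuousOn_primitive_interval (a := 0) (b := 1) (μ := volume) hint
  have h0 : ContinuousWithinAt II (Set.Ioo 0 1) 0 := by
    have h' := (h 0 (by rw [Set.uIcc_of_le (by norm_num : (0:ℝ) ≤ 1)]; exact ⟨le_rfl, by norm_num⟩))
    have hsub : Set.Ioo (0:ℝ) 1 ⊆ Set.uIcc 0 1 := by
      rw [Set.uIcc_of_le (by norm_num : (0:ℝ) ≤ 1)]; exact Set.Ioo_subset_Icc_self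
    exact h'.mono hsub
  rw [ContinuousWithinAt, nhdsWithin_Ioo_eq_nhdsGT one_pos] at h0
  have hII0 : II 0 = 0 := intervalIntegral.integral_same
  rwa [hII0] at h0

lemma WW_zero {c : ℝ} (hc : 0 < c) : WW c = 0 := by
  have h1 : Tendsto WW (𝓝[>] (0:ℝ)) (𝓝 (0 - 0 - 0)) := by
    refine (tendsto_II_zero.sub (tendsto_KK_zero.comp ?_)).sub ?_
    · apply tendsto_nhdsWithin_of_tendsto_nhds_of_eventually_within
      · have h : ContinuousAt (fun b : ℝ => b/(1+b)) 0 := by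
          apply ContinuousAt.div (by fun_prop) (by fun_prop) (by norm_num)
        simpa using h.tendsto.mono_left nhdsWithin_le_nhds
      · filter_upwards [self_mem_nhdsWithin] with b hb
        have hb0 : (0:ℝ) < b := hb
        have : (0:ℝ) < b/(1+b) := by positivity
        exact this
    · have h : ContinuousAt (fun b : ℝ => (Real.log (1+b))^2/2) 0 := by
        have hl : ContinuousAt (fun b : ℝ => Real.log (1+b)) 0 :=
          (Real.continuousAt_log (by norm_num)).comp (by fun_prop)
        fun_prop (disch := norm_num)
      have h' := h.tendsto.mono_left (nhdsWithin_le_nhds (s := Set.Ioi (0:ℝ)))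
      simpa using h'
  have h2 : Tendsto WW (𝓝[>] (0:ℝ)) (𝓝 (WW c)) := by
    apply Tendsto.congr' _ (tendsto_const_nhds (x := WW c))
    filter_upwards [Ioc_mem_nhdsGT_of_mem (Set.left_mem_Ico.mpr hc)] with b hb
    exact WW_const hb.1 hb.2
  have := tendsto_nhds_unique h2 h1
  simpa using this

/-! ### Golden ratio facts -/

lemma sqrt5_lt : 2 < Real.sqrt 5 ∧ Real.sqrt 5 < 3 := by
  constructor
  · have h : (2:ℝ) = Real.sqrt 4 := by
      rw [show (4:ℝ) = 2^2 by norm_num, Real.sqrt_sq (by norm_num)]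
    rw [h]
    exact Real.sqrt_lt_sqrt (by norm_num) (by norm_num)
  · have h : (3:ℝ) = Real.sqrt 9 := by
      rw [show (9:ℝ) = 3^2 by norm_num, Real.sqrt_sq (by norm_num)]
    rw [h]
    exact Real.sqrt_lt_sqrt (by norm_num) (by norm_num)

lemma golden_facts :
    1 < (Real.sqrt 5 + 1)/2 ∧ (Real.sqrt 5 + 1)/2 < 2 ∧
      ((Real.sqrt 5 + 1)/2)^2 = (Real.sqrt 5 + 1)/2 + 1 := by
  have h5 : Real.sqrt 5 ^ 2 = 5 := Real.sq_sqrt (by norm_num)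
  obtain ⟨h2, h3⟩ := sqrt5_lt
  exact ⟨by linarith, by linarith, by nlinarith⟩

lemma hG_eq (x : ℝ) : hG x =
    (3 * Real.log ((Real.sqrt 5 + 1)/2))⁻¹ *
      (if x < (1-((Real.sqrt 5 + 1)/2))/((Real.sqrt 5 + 1)/2)
        then 1/(x+((Real.sqrt 5 + 1)/2)+1) else 1/(x+1)) := rfl

/-- The entropy integral at α = G equals −π²/(18 log G). -/
theorem stmt11 :
    ∫ x in ((Real.sqrt 5 + 1)/2 - 2)..((Real.sqrt 5 + 1)/2),
        Real.log |x| * hG x =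
      -(Real.pi^2) / (18 * Real.log ((Real.sqrt 5 + 1)/2)) := by
  set G : ℝ := (Real.sqrt 5 + 1)/2 with hGdef
  obtain ⟨hG1, hG2, hGsq⟩ := golden_facts
  rw [← hGdef] at hG1 hG2 hGsq
  have hG0 : 0 < G := by linarith
  have hlogG : 0 < Real.log G := Real.log_pos hG1
  set p : ℝ := G - 1 with hp
  have hpinv : p = G⁻¹ := by
    field_simp [hp]
    nlinarith
  have hp01 : p ∈ Set.Ioo (0:ℝ) 1 := ⟨by simp [hp]; linarith, by simp [hp]; linarith⟩
  have h1p : 1 - p = 2 - G := by ring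
  have hGm2 : (1 - G)/G = G - 2 := by
    field_simp
    nlinarith
  have hIcc : Set.uIcc (G - 2) G = Set.Icc (G-2) G := Set.uIcc_of_le (by linarith)
  have hcongr : ∀ x ∈ Set.uIcc (G - 2) G,
      Real.log |x| * hG x = (3 * Real.log G)⁻¹ * qq x := by
    intro x hx
    rw [hIcc] at hx
    rw [hG_eq, ← hGdef, hGm2, if_neg (not_lt.mpr hx.1), Real.log_abs, qq]
    ring
  rw [intervalIntegral.integral_congr hcongr]
  rw [intervalIntegral.integral_const_mul]
  have hI1 : ∫ x in (G-2)..(0:ℝ), qq x = KK (1 - p) := by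
    have hcomp : ∀ x : ℝ, qq x = Real.log (-x) * (1 - (-x))⁻¹ := by
      intro x
      rw [qq, Real.log_neg_eq_log]
      ring_nf
    calc ∫ x in (G-2)..(0:ℝ), qq x
        = ∫ x in (G-2)..(0:ℝ), Real.log (-x) * (1 - (-x))⁻¹ := by
          apply intervalIntegral.integral_congr; intro x _; exact hcomp x
      _ = ∫ x in (-(0:ℝ))..(-(G-2)), Real.log x * (1 - x)⁻¹ :=
          intervalIntegral.integral_comp_neg (fun x => Real.log x * (1 - x)⁻¹)
      _ = KK (1 - p) := by rw [KK, h1p]; norm_num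
  have hI2 : ∫ x in (0:ℝ)..G, qq x = KK p + 2 * (Real.log G)^2 := by
    have hW := WW_zero hG0
    have hu : G/(1+G) = p := by
      rw [hpinv]
      field_simp
      nlinarith [hGsq]
    have hlg : Real.log (1+G) = 2 * Real.log G := by
      have h : 1 + G = G^2 := by linarith
      rw [h, Real.log_pow]
      push_cast; ring
    rw [WW, hu, hlg] at hW
    have h : II G = KK p + (2*Real.log G)^2/2 := by linarith
    rw [II] at h
    rw [h]
    ring
  have hsplit : ∫ x in (G-2)..G, qq x = (∫ x in (G-2)..(0:ℝ), qq x) + ∫ x in (0:ℝ)..G, qq x :=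
    (intervalIntegral.integral_add_adjacent_intervals
      (qq_integrable (by linarith) (by norm_num))
      (qq_integrable (by norm_num) (by linarith))).symm
  have hFF := FF_eq_KK_one hp01
  rw [KK_one, FF] at hFF
  have hlogp : Real.log p = -Real.log G := by
    rw [hpinv, Real.log_inv]
  have hlog1p : Real.log (1 - p) = -(2*Real.log G) := by
    have h2G : 1 - p = (G^2)⁻¹ := by
      rw [h1p]
      field_simp
      nlinarith [hGsq]
    rw [h2G, Real.log_inv, Real.log_pow]
    push_cast; ring
  rw [hlogp, hlog1p] at hFF
  have hprod : (-Real.log G) * (-(2*Real.log G)) = 2*(Real.log G)^2 := by ring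
  rw [hprod] at hFF
  rw [hsplit, hI1, hI2]
  have hfin : KK (1-p) + (KK p + 2*(Real.log G)^2) = -(Real.pi^2/6) := by linarith
  rw [hfin]
  have hne : Real.log G ≠ 0 := ne_of_gt hlogG
  field_simp
  ring
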